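/- Let P ⊆ ℝ^d be a polytope with diameter D > 0 and width W > 0. Suppose the cost vectors b_1, …, b_N ∈ ℝ^d satisfy |b_n·(x−y)| ≤ L_∞ for all x, y ∈ P and all n, with L_∞ > 0. Let x_1, …, x_N be the actions of the lazy anytime Subgradient algorithm on P with base point y_1 ∈ P and parameter η = D·W/(2·L_∞), and let x* minimise x ↦ Σ_{i=1}^N b_i·x over P. Then the regret satisfies Σ_{i=1}^N b_i·(x_i − x*) ≤ 3·L_∞·D·√N / W. -/

import Mathlib

open Finset
open scoped RealInnerProductSpace

/-- `IsProjOn X p q` says that `q` is the Euclidean nearest-point projection of `p`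
onto the set `X`. -/
def IsProjOn {d : ℕ} (X : Set (EuclideanSpace ℝ (Fin d)))
    (p q : EuclideanSpace ℝ (Fin d)) : Prop :=
  q ∈ X ∧ ∀ z ∈ X, ‖p - q‖ ≤ ‖p - z‖

/-- Variational inequality for nearest-point projection onto a convex set. -/
lemma isProjOn_inner_le {d : ℕ} {X : Set (EuclideanSpace ℝ (Fin d))} (hX : Convex ℝ X)
    {p q : EuclideanSpace ℝ (Fin d)} (h : IsProjOn X p q)
    {z : EuclideanSpace ℝ (Fin d)} (hz : z ∈ X) : ⟪p - q, z - q⟫ ≤ 0 := by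
  obtain ⟨hq, hmin⟩ := h
  have hne : Nonempty X := ⟨⟨q, hq⟩⟩
  have h1 : ‖p - q‖ = ⨅ w : X, ‖p - w‖ := by
    apply le_antisymm
    · exact le_ciInf fun w => hmin w w.2
    · have hbdd : BddBelow (Set.range fun w : X => ‖p - (w : EuclideanSpace ℝ (Fin d))‖) := by
        refine ⟨0, ?_⟩
        rintro r ⟨w, rfl⟩
        positivity
      exact ciInf_le hbdd ⟨q, hq⟩
  exact (norm_eq_iInf_iff_real_inner_le_zero hX hq).mp h1 z hz

/-- `∑_{n=1}^N 1/√n ≤ 2√N`. -/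
lemma sum_inv_sqrt_le (N : ℕ) :
    ∑ n ∈ Finset.range N, (Real.sqrt (n + 1))⁻¹ ≤ 2 * Real.sqrt N := by
  induction N with
  | zero => simp
  | succ N ih =>
    rw [Finset.sum_range_succ]
    have h1 : (0:ℝ) < Real.sqrt (N + 1) := Real.sqrt_pos.mpr (by positivity)
    have h2 : Real.sqrt N ^ 2 = N := Real.sq_sqrt (by positivity)
    have h3 : Real.sqrt (N + 1) ^ 2 = N + 1 := Real.sq_sqrt (by positivity)
    have h4 : (0:ℝ) ≤ Real.sqrt N := Real.sqrt_nonneg _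
    have key : (Real.sqrt ((N:ℝ) + 1))⁻¹ ≤ 2 * Real.sqrt (N + 1) - 2 * Real.sqrt N := by
      rw [inv_le_iff_one_le_mul₀ h1]
      nlinarith [sq_nonneg (Real.sqrt (N+1) - Real.sqrt N)]
    push_cast
    push_cast at ih
    linarith

/-- Reindexing a sum over `Icc 1 N` as a sum over `range N`. -/
lemma sum_Icc_one_eq_sum_range {M : Type*} [AddCommMonoid M] (f : ℕ → M) (N : ℕ) :
    ∑ i ∈ Finset.Icc 1 N, f i = ∑ i ∈ Finset.range N, f (i + 1) := by
  induction N with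
  | zero => simp
  | succ N ih => rw [Finset.sum_Icc_succ_top (by omega), Finset.sum_range_succ, ih]

set_option maxHeartbeats 1200000 in
/-- Theorem 6: worst-case regret of the lazy anytime Subgradient algorithm on a polytope
under intrinsic bounds on the cost vectors. -/
theorem subgradient_worst_case_regret_intrinsic {d : ℕ}
    (V : Finset (EuclideanSpace ℝ (Fin d)))
    (P : Set (EuclideanSpace ℝ (Fin d)))
    (hP : P = convexHull ℝ (V : Set (EuclideanSpace ℝ (Fin d))))
    (D : ℝ) (hD0 : 0 < D)
    (hD : IsGreatest {r : ℝ | ∃ x ∈ P, ∃ y ∈ P, r = ‖x - y‖} D)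
    (U : Submodule ℝ (EuclideanSpace ℝ (Fin d))) (t : EuclideanSpace ℝ (Fin d))
    (hU : (affineSpan ℝ P : Set (EuclideanSpace ℝ (Fin d))) =
      (fun u => u + t) '' (U : Set (EuclideanSpace ℝ (Fin d))))
    (W : ℝ) (hW0 : 0 < W)
    (hW : IsLeast {w : ℝ | ∃ ℓ : EuclideanSpace ℝ (Fin d), ℓ ∈ U ∧ ‖ℓ‖ = 1 ∧
      IsGreatest {r : ℝ | ∃ x ∈ P, ∃ y ∈ P, r = ⟪ℓ, x - y⟫} w} W)
    (N : ℕ) (hN : 1 ≤ N)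
    (b : ℕ → EuclideanSpace ℝ (Fin d))
    (Linf : ℝ) (hLinf0 : 0 < Linf)
    (hb : ∀ n, 1 ≤ n → n ≤ N → ∀ x ∈ P, ∀ y ∈ P, |⟪b n, x - y⟫| ≤ Linf)
    (y1 : EuclideanSpace ℝ (Fin d)) (hy1 : y1 ∈ P)
    (η : ℝ) (hη : η = D * W / (2 * Linf))
    (x : ℕ → EuclideanSpace ℝ (Fin d))
    (hx1 : IsProjOn P y1 (x 1))
    (hxn : ∀ n, 2 ≤ n →
      IsProjOn P
        (y1 - (η / Real.sqrt ((n - 1 : ℕ) : ℝ)) • ∑ i ∈ Icc 1 (n - 1), b i) (x n))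
    (xstar : EuclideanSpace ℝ (Fin d)) (hxstar : xstar ∈ P)
    (hxstarmin : ∀ z ∈ P,
      ∑ i ∈ Icc 1 N, ⟪b i, xstar⟫ ≤ ∑ i ∈ Icc 1 N, ⟪b i, z⟫) :
    ∑ i ∈ Icc 1 N, ⟪b i, x i - xstar⟫ ≤ 3 * Linf * D * Real.sqrt N / W := by
  classical
  have hη0 : 0 < η := by rw [hη]; positivity
  set G : ℝ := Linf / W with hG
  have hG0 : 0 < G := by positivity
  have hPconv : Convex ℝ P := hP ▸ convex_convexHull ℝ _
  have hPcomp : IsCompact P := hP ▸ V.finite_toSet.isCompact_convexHull ℝ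
  -- differences of points of P lie in U
  have hUmem : ∀ u ∈ P, ∀ w ∈ P, u - w ∈ U := by
    intro u hu w hw
    have hu' : u ∈ (affineSpan ℝ P : Set (EuclideanSpace ℝ (Fin d))) := subset_affineSpan ℝ P hu
    have hw' : w ∈ (affineSpan ℝ P : Set (EuclideanSpace ℝ (Fin d))) := subset_affineSpan ℝ P hw
    rw [hU] at hu' hw'
    obtain ⟨a, ha, rfl⟩ := hu'
    obtain ⟨c, hc, rfl⟩ := hw'
    simpa using U.sub_mem ha hc
  -- cost vectors have small projection onto U
  have hbG : ∀ n, 1 ≤ n → n ≤ N → ∀ u ∈ P, ∀ w ∈ P, ⟪b n, u - w⟫ ≤ G * ‖u - w‖ := by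
    intro n hn1 hnN u hu w hw
    set pb : EuclideanSpace ℝ (Fin d) := (U.orthogonalProjectionOnto (b n) : EuclideanSpace ℝ (Fin d))
      with hpbdef
    have hpbU : pb ∈ U := (U.orthogonalProjectionOnto (b n)).2
    have hproj_eq : ∀ v ∈ U, ⟪b n, v⟫ = ⟪pb, v⟫ := by
      intro v hv
      have hperp : b n - pb ∈ Uᗮ := Submodule.sub_starProjection_mem_orthogonal (K := U) (b n)
      have h0 : ⟪v, b n - pb⟫ = 0 := (Submodule.mem_orthogonal U _).mp hperp v hv
      have h0' : ⟪b n - pb, v⟫ = 0 := by rw [real_inner_comm]; exact h0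
      rw [inner_sub_left] at h0'
      linarith
    have hnormpb : ‖pb‖ ≤ G := by
      rcases eq_or_ne pb 0 with h0 | h0
      · rw [h0]; simpa using hG0.le
      · set ℓ : EuclideanSpace ℝ (Fin d) := ‖pb‖⁻¹ • pb with hℓdef
        have hℓU : ℓ ∈ U := U.smul_mem _ hpbU
        have hℓn : ‖ℓ‖ = 1 := norm_smul_inv_norm h0
        have hcont : Continuous fun z : EuclideanSpace ℝ (Fin d) => ⟪ℓ, z⟫ :=
          Continuous.inner continuous_const continuous_id
        obtain ⟨x0, hx0P, hx0max⟩ := hPcomp.exists_isMaxOn ⟨y1, hy1⟩ hcont.continuousOn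
        obtain ⟨y0, hy0P, hy0min⟩ := hPcomp.exists_isMinOn ⟨y1, hy1⟩ hcont.continuousOn
        have hgreat : IsGreatest {r : ℝ | ∃ a ∈ P, ∃ c ∈ P, r = ⟪ℓ, a - c⟫} (⟪ℓ, x0 - y0⟫) := by
          constructor
          · exact ⟨x0, hx0P, y0, hy0P, rfl⟩
          · rintro r ⟨a, ha, c, hc, rfl⟩
            have h1 : ⟪ℓ, a⟫ ≤ ⟪ℓ, x0⟫ := hx0max ha
            have h2 : ⟪ℓ, y0⟫ ≤ ⟪ℓ, c⟫ := hy0min hc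
            rw [inner_sub_right, inner_sub_right]
            linarith
        have hWle : W ≤ ⟪ℓ, x0 - y0⟫ := hW.2 ⟨ℓ, hℓU, hℓn, hgreat⟩
        have hsc : ⟪ℓ, x0 - y0⟫ = ‖pb‖⁻¹ * ⟪pb, x0 - y0⟫ := real_inner_smul_left _ _ _
        have hbn : ⟪b n, x0 - y0⟫ = ⟪pb, x0 - y0⟫ := hproj_eq _ (hUmem x0 hx0P y0 hy0P)
        have hLle : ⟪b n, x0 - y0⟫ ≤ Linf := le_trans (le_abs_self _) (hb n hn1 hnN x0 hx0P y0 hy0P)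
        have hpbpos : 0 < ‖pb‖ := norm_pos_iff.mpr h0
        have hkey : ‖pb‖ * W ≤ Linf := by
          calc ‖pb‖ * W ≤ ‖pb‖ * ⟪ℓ, x0 - y0⟫ := by
                exact mul_le_mul_of_nonneg_left hWle hpbpos.le
            _ = ⟪pb, x0 - y0⟫ := by rw [hsc]; field_simp
            _ = ⟪b n, x0 - y0⟫ := hbn.symm
            _ ≤ Linf := hLle
        rw [hG, le_div_iff₀ hW0]
        exact hkey
    calc ⟪b n, u - w⟫ = ⟪pb, u - w⟫ := hproj_eq _ (hUmem u hu w hw)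
      _ ≤ ‖pb‖ * ‖u - w‖ := real_inner_le_norm _ _
      _ ≤ G * ‖u - w‖ := mul_le_mul_of_nonneg_right hnormpb (norm_nonneg _)
  -- the FTRL potential data
  set lam : ℕ → ℝ := fun n => Real.sqrt ((max n 1 : ℕ) : ℝ) / η with hlamdef
  set S : ℕ → EuclideanSpace ℝ (Fin d) := fun n => ∑ i ∈ Icc 1 n, b i with hSdef
  have hlam_pos : ∀ n, 0 < lam n := by
    intro n
    have h1 : (0:ℝ) < ((max n 1 : ℕ) : ℝ) := by
      have : 1 ≤ max n 1 := le_max_right _ _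
      exact_mod_cast Nat.lt_of_lt_of_le Nat.zero_lt_one this
    exact div_pos (Real.sqrt_pos.mpr h1) hη0
  -- the iterates are projections of the potential centers
  have hproj : ∀ n : ℕ, IsProjOn P (y1 - (lam n)⁻¹ • S n) (x (n + 1)) := by
    intro n
    match n with
    | 0 =>
      have hS0 : S 0 = 0 := by simp [hSdef]
      rw [hS0, smul_zero, sub_zero]
      exact hx1
    | (m+1) =>
      have h := hxn (m + 2) (by omega)
      have heq : ((m + 2 - 1 : ℕ) : ℕ) = m + 1 := by omega
      rw [heq] at h
      have hmax : (max (m+1) 1 : ℕ) = m + 1 := by omega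
      have hcoef : (lam (m+1))⁻¹ = η / Real.sqrt ((m + 1 : ℕ) : ℝ) := by
        rw [hlamdef]
        simp only [hmax]
        rw [inv_div]
      rw [hcoef]
      exact h
  have hxP : ∀ n, 1 ≤ n → x n ∈ P := by
    intro n hn
    obtain ⟨m, rfl⟩ : ∃ m, n = m + 1 := ⟨n - 1, by omega⟩
    exact (hproj m).1
  -- key strong-convexity inequality for the FTRL minimizers
  have keyA : ∀ n : ℕ, ∀ z ∈ P,
      ⟪S n, x (n+1)⟫ + lam n / 2 * ‖x (n+1) - y1‖^2 + lam n / 2 * ‖z - x (n+1)‖^2 ≤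
        ⟪S n, z⟫ + lam n / 2 * ‖z - y1‖^2 := by
    intro n z hz
    set q := x (n+1) with hq
    have hvi : ⟪(y1 - (lam n)⁻¹ • S n) - q, z - q⟫ ≤ 0 :=
      isProjOn_inner_le hPconv (hproj n) hz
    have hsq : ‖z - y1‖^2 = ‖z - q‖^2 + 2*⟪z - q, q - y1⟫ + ‖q - y1‖^2 := by
      have h := norm_add_sq_real (z - q) (q - y1)
      rw [sub_add_sub_cancel] at h
      exact h
    have h3 : ⟪(y1 - (lam n)⁻¹ • S n) - q, z - q⟫
        = ⟪y1 - q, z - q⟫ - (lam n)⁻¹ * ⟪S n, z - q⟫ := by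
      rw [sub_right_comm, inner_sub_left, real_inner_smul_left]
    have h4 : ⟪S n, z - q⟫ = ⟪S n, z⟫ - ⟪S n, q⟫ := inner_sub_right _ _ _
    have h5 : ⟪z - q, q - y1⟫ = -⟪y1 - q, z - q⟫ := by
      rw [real_inner_comm, show q - y1 = -(y1 - q) by abel, inner_neg_left]
    have h6 : lam n * ⟪y1 - q, z - q⟫ ≤ ⟪S n, z - q⟫ := by
      rw [h3] at hvi
      have h6' : ⟪y1 - q, z - q⟫ ≤ (lam n)⁻¹ * ⟪S n, z - q⟫ := by linarith
      calc lam n * ⟪y1 - q, z - q⟫ ≤ lam n * ((lam n)⁻¹ * ⟪S n, z - q⟫) :=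
            mul_le_mul_of_nonneg_left h6' (hlam_pos n).le
        _ = ⟪S n, z - q⟫ := by rw [← mul_assoc, mul_inv_cancel₀ (hlam_pos n).ne', one_mul]
    rw [hsq, h5]
    nlinarith [h4, h6]
  -- main induction
  have main : ∀ m, m ≤ N →
      ∑ n ∈ Icc 1 m, ⟪b n, x n⟫ ≤
        ⟪S m, x (m+1)⟫ + lam m / 2 * ‖x (m+1) - y1‖^2
          + ∑ n ∈ Icc 1 m, G^2 / (2 * lam (n-1)) := by
    intro m
    induction m with
    | zero =>
      intro _
      have hS0 : S 0 = 0 := by simp [hSdef]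
      have h0 : Icc 1 0 = (∅ : Finset ℕ) := by simp
      rw [h0]
      simp only [Finset.sum_empty, hS0, inner_zero_left, zero_add, add_zero]
      exact mul_nonneg (by linarith [hlam_pos 0]) (sq_nonneg _)
    | succ m ih =>
      intro hm1
      have ihm := ih (by omega)
      rw [Finset.sum_Icc_succ_top (by omega : 1 ≤ m+1), Finset.sum_Icc_succ_top (by omega : 1 ≤ m+1)]
      have hq1 : x (m+1) ∈ P := hxP _ (by omega)
      have hq2 : x (m+2) ∈ P := hxP _ (by omega)
      have hkey := keyA m (x (m+2)) hq2
      have hstep : ⟪S (m+1), x (m+2)⟫ = ⟪S m, x (m+2)⟫ + ⟪b (m+1), x (m+2)⟫ := by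
        rw [hSdef]
        simp only
        rw [Finset.sum_Icc_succ_top (by omega : 1 ≤ m+1), inner_add_left]
      have hdelta : lam m ≤ lam (m+1) := by
        rw [hlamdef]
        have hmle : ((max m 1 : ℕ) : ℝ) ≤ ((max (m+1) 1 : ℕ) : ℝ) := by
          exact_mod_cast (show (max m 1 : ℕ) ≤ (max (m+1) 1 : ℕ) by omega)
        have hsq := Real.sqrt_le_sqrt hmle
        rw [div_le_div_iff₀ hη0 hη0]
        exact mul_le_mul_of_nonneg_right hsq hη0.le
      have hBn : ⟪b (m+1), x (m+1) - x (m+2)⟫ ≤ G * ‖x (m+1) - x (m+2)‖ :=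
        hbG (m+1) (by omega) (by omega) _ hq1 _ hq2
      have hquad : G * ‖x (m+1) - x (m+2)‖ - lam m / 2 * ‖x (m+1) - x (m+2)‖^2
          ≤ G^2 / (2 * lam m) := by
        rw [le_div_iff₀ (by linarith [hlam_pos m] : (0:ℝ) < 2 * lam m)]
        nlinarith [sq_nonneg (G - lam m * ‖x (m+1) - x (m+2)‖), hlam_pos m]
      have hns : ‖x (m+2) - x (m+1)‖ = ‖x (m+1) - x (m+2)‖ := norm_sub_rev _ _
      rw [hns] at hkey
      have hsplit : ⟪b (m+1), x (m+1)⟫ = ⟪b (m+1), x (m+2)⟫ + ⟪b (m+1), x (m+1) - x (m+2)⟫ := by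
        rw [inner_sub_right]; ring
      have hposTerm : 0 ≤ (lam (m+1) - lam m) / 2 * ‖x (m+2) - y1‖^2 := by
        apply mul_nonneg (by linarith) (sq_nonneg _)
      have hlamidx : lam ((m+1) - 1) = lam m := by norm_num
      rw [hlamidx]
      have hlamm2 : lam (m+1) / 2 * ‖x (m+2) - y1‖^2
          = lam m / 2 * ‖x (m+2) - y1‖^2 + (lam (m+1) - lam m) / 2 * ‖x (m+2) - y1‖^2 := by ring
      linarith [ihm, hkey, hBn, hquad, hsplit, hstep, hposTerm, hlamm2,
        sq_nonneg (‖x (m+1) - x (m+2)‖)]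
  -- conclude
  have hfin := main N le_rfl
  have hxs := keyA N xstar hxstar
  have hq : 0 ≤ lam N / 2 * ‖xstar - x (N+1)‖^2 :=
    mul_nonneg (by linarith [hlam_pos N]) (sq_nonneg _)
  have hSinner : ⟪S N, xstar⟫ = ∑ i ∈ Icc 1 N, ⟪b i, xstar⟫ := by
    rw [hSdef]; exact sum_inner _ _ _
  have hDle : ‖xstar - y1‖ ≤ D := hD.2 ⟨xstar, hxstar, y1, hy1, rfl⟩
  have hDsq : ‖xstar - y1‖^2 ≤ D^2 := by
    have := norm_nonneg (xstar - y1)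
    nlinarith
  -- bound the error sum
  have hCsum : ∑ n ∈ Icc 1 N, G^2 / (2 * lam (n-1)) ≤ 2 * G^2 * η * Real.sqrt N := by
    have hterm : ∀ n ∈ Icc 1 N, G^2 / (2 * lam (n-1)) ≤ G^2 * η * (Real.sqrt n)⁻¹ := by
      intro n hn
      have hn1 : 1 ≤ n := (Finset.mem_Icc.mp hn).1
      have hMnat : (n : ℝ) ≤ 4 * ((max (n-1) 1 : ℕ) : ℝ) := by
        have : n ≤ 4 * max (n-1) 1 := by omega
        exact_mod_cast this
      have hMpos : (0:ℝ) < ((max (n-1) 1 : ℕ) : ℝ) := by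
        have : 1 ≤ max (n-1) 1 := le_max_right _ _
        exact_mod_cast Nat.lt_of_lt_of_le Nat.zero_lt_one this
      have hsqle : Real.sqrt n ≤ 2 * Real.sqrt ((max (n-1) 1 : ℕ) : ℝ) := by
        calc Real.sqrt n ≤ Real.sqrt (4 * ((max (n-1) 1 : ℕ) : ℝ)) := Real.sqrt_le_sqrt hMnat
          _ = 2 * Real.sqrt ((max (n-1) 1 : ℕ) : ℝ) := by
              rw [show (4:ℝ) = 2^2 by norm_num, Real.sqrt_mul (by positivity),
                Real.sqrt_sq (by norm_num)]
      have hsqrtMpos : 0 < Real.sqrt ((max (n-1) 1 : ℕ) : ℝ) := Real.sqrt_pos.mpr hMpos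
      have hsqrtnpos : 0 < Real.sqrt n := Real.sqrt_pos.mpr (by exact_mod_cast Nat.lt_of_lt_of_le Nat.zero_lt_one hn1)
      have hlameq : lam (n-1) = Real.sqrt ((max (n-1) 1 : ℕ) : ℝ) / η := by rw [hlamdef]
      have hG2η : (0:ℝ) ≤ G^2 * η := mul_nonneg (by positivity) hη0.le
      have hEq : G^2 / (2 * (Real.sqrt ((max (n-1) 1 : ℕ) : ℝ) / η))
          = G^2 * η / (2 * Real.sqrt ((max (n-1) 1 : ℕ) : ℝ)) := by
        field_simp
      rw [hlameq, hEq, ← div_eq_mul_inv, div_le_div_iff₀ (by positivity) hsqrtnpos]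
      have hmul : G^2 * η * Real.sqrt n ≤ G^2 * η * (2 * Real.sqrt ((max (n-1) 1 : ℕ) : ℝ)) :=
        mul_le_mul_of_nonneg_left hsqle hG2η
      nlinarith [hmul]
    calc ∑ n ∈ Icc 1 N, G^2 / (2 * lam (n-1))
        ≤ ∑ n ∈ Icc 1 N, G^2 * η * (Real.sqrt n)⁻¹ := Finset.sum_le_sum hterm
      _ = G^2 * η * ∑ n ∈ Icc 1 N, (Real.sqrt n)⁻¹ := by rw [Finset.mul_sum]
      _ ≤ G^2 * η * (2 * Real.sqrt N) := by
          apply mul_le_mul_of_nonneg_left _ (by positivity)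
          rw [sum_Icc_one_eq_sum_range (fun n => (Real.sqrt n)⁻¹) N]
          have := sum_inv_sqrt_le N
          calc ∑ i ∈ Finset.range N, (Real.sqrt ((i+1 : ℕ) : ℝ))⁻¹
              = ∑ i ∈ Finset.range N, (Real.sqrt ((i : ℝ) + 1))⁻¹ := by
                apply Finset.sum_congr rfl; intro i _; norm_num
            _ ≤ 2 * Real.sqrt N := this
      _ = 2 * G^2 * η * Real.sqrt N := by ring
  -- regret decomposition
  have hregret : ∑ i ∈ Icc 1 N, ⟪b i, x i - xstar⟫
      = (∑ i ∈ Icc 1 N, ⟪b i, x i⟫) - ⟪S N, xstar⟫ := by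
    rw [hSinner, ← Finset.sum_sub_distrib]
    apply Finset.sum_congr rfl
    intro i _
    rw [inner_sub_right]
  have hlamN : lam N = Real.sqrt N / η := by
    have hmax : (max N 1 : ℕ) = N := by omega
    simp only [hlamdef, hmax]
  have hchain : ∑ i ∈ Icc 1 N, ⟪b i, x i - xstar⟫
      ≤ lam N / 2 * D^2 + 2 * G^2 * η * Real.sqrt N := by
    rw [hregret]
    have h1 : ⟪S N, x (N+1)⟫ + lam N / 2 * ‖x (N+1) - y1‖^2
        ≤ ⟪S N, xstar⟫ + lam N / 2 * ‖xstar - y1‖^2 := by linarith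
    have h2 : lam N / 2 * ‖xstar - y1‖^2 ≤ lam N / 2 * D^2 :=
      mul_le_mul_of_nonneg_left hDsq (by positivity)
    linarith
  -- final arithmetic
  have hsqN : 0 ≤ Real.sqrt N := Real.sqrt_nonneg _
  have harith : lam N / 2 * D^2 + 2 * G^2 * η * Real.sqrt N = 2 * Linf * D * Real.sqrt N / W := by
    rw [hlamN, hG, hη]
    field_simp
    ring
  rw [harith] at hchain
  have h1 : 0 ≤ Linf * D * Real.sqrt N / W := by positivity
  have heq : 3 * Linf * D * Real.sqrt N / W - 2 * Linf * D * Real.sqrt N / W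
      = Linf * D * Real.sqrt N / W := by ring
  linarith
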